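/- Assume (Hf). Let Φ₀ : ℝ → ℝⁿ be bounded and C¹ with ∂ξΦ₀ ∈ L² and f(Φ₀) ∈ L². Then there exists K > 0, depending only on f and Φ₀ and not on Φ, such that for every Φ with Φ − Φ₀ ∈ H¹ and ‖Φ − Φ₀‖_{H¹} ≤ 1, every v ∈ H¹ and every ψ ∈ H¹: ‖f(Φ+v)‖_{L²} ≤ K(1 + ‖v‖_{H¹}² ‖v‖_{L²}) and |⟨f(Φ+v), ψ⟩_{L²}| ≤ K(1 + ‖v‖_{H¹} ‖v‖_{L²}²) ‖ψ‖_{H¹}. -/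

import Mathlib

open MeasureTheory

noncomputable section

abbrev En (n : ℕ) : Type := EuclideanSpace ℝ (Fin n)

/-- membership in `L²(ℝ;ℝⁿ)` -/
def memL2 {n : ℕ} (f : ℝ → En n) : Prop := MemLp f 2 volume

/-- the `L²` norm -/
def l2norm {n : ℕ} (f : ℝ → En n) : ℝ := (eLpNorm f 2 volume).toReal

/-- the `L²` inner product -/
def l2inner {n : ℕ} (f g : ℝ → En n) : ℝ := ∫ ξ, (inner ℝ (f ξ) (g ξ) : ℝ)

/-- `f` is locally absolutely continuous with derivative `f'` -/
def hasWeakDeriv {n : ℕ} (f f' : ℝ → En n) : Prop :=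
  LocallyIntegrable f' volume ∧ ∀ x y : ℝ, f y - f x = ∫ t in x..y, f' t

/-- membership in `H¹`, with the derivative recorded explicitly -/
def memH1 {n : ℕ} (f f' : ℝ → En n) : Prop :=
  hasWeakDeriv f f' ∧ memL2 f ∧ memL2 f'

/-- the `H¹` norm -/
def h1norm {n : ℕ} (f f' : ℝ → En n) : ℝ :=
  Real.sqrt ((l2norm f)^2 + (l2norm f')^2)

/-- membership in `H²`, with both derivatives recorded explicitly -/
def memH2 {n : ℕ} (f f' f'' : ℝ → En n) : Prop :=
  memH1 f f' ∧ memH1 f' f''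

/-- the `H²` norm -/
def h2norm {n : ℕ} (f f' f'' : ℝ → En n) : ℝ :=
  Real.sqrt ((l2norm f)^2 + (l2norm f')^2 + (l2norm f'')^2)


open ENNReal
set_option linter.unusedVariables false
set_option linter.unusedSectionVars false

lemma norm_mem_segment {V : Type*} [NormedAddCommGroup V] [NormedSpace ℝ V]
    {a b x : V} (hx : x ∈ segment ℝ a b) : ‖x‖ ≤ ‖a‖ + ‖b‖ := by
  obtain ⟨θ, η, hθ, hη, hsum, rfl⟩ := hx
  calc ‖θ • a + η • b‖ ≤ ‖θ • a‖ + ‖η • b‖ := norm_add_le _ _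
    _ = θ * ‖a‖ + η * ‖b‖ := by rw [norm_smul, norm_smul, Real.norm_of_nonneg hθ, Real.norm_of_nonneg hη]
    _ ≤ ‖a‖ + ‖b‖ := by nlinarith [norm_nonneg a, norm_nonneg b, hθ, hη, hsum]

set_option maxHeartbeats 1000000 in
lemma growth {V : Type*} [NormedAddCommGroup V] [NormedSpace ℝ V] (f : V → V) (hf : ContDiff ℝ 3 f) (Kf : ℝ) (hKf : 0 < Kf)
    (hD3 : ∀ u, ‖iteratedFDeriv ℝ 3 f u‖ ≤ Kf) :
    ∃ C > (0:ℝ), ∀ a b : V, ‖f b - f a‖ ≤ C * (1 + ‖a‖ + ‖b‖)^2 * ‖b - a‖ := by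
  set g := fderiv ℝ f with hgdef
  set h2 := fderiv ℝ g with hh2def
  have hg : ContDiff ℝ 2 g := hf.fderiv_right (by norm_num)
  have hh : ContDiff ℝ 1 h2 := hg.fderiv_right (by norm_num)
  have hdf : Differentiable ℝ f := hf.differentiable (by norm_num)
  have hdg : Differentiable ℝ g := hg.differentiable (by norm_num)
  have hdh : Differentiable ℝ h2 := hh.differentiable (by norm_num)
  have key : ∀ u, ‖fderiv ℝ h2 u‖ ≤ Kf := by
    intro u
    have e0 : ‖iteratedFDeriv ℝ 0 (fderiv ℝ h2) u‖ = ‖iteratedFDeriv ℝ 1 h2 u‖ :=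
      norm_iteratedFDeriv_fderiv
    have e1 : ‖iteratedFDeriv ℝ 1 (fderiv ℝ g) u‖ = ‖iteratedFDeriv ℝ 2 g u‖ :=
      norm_iteratedFDeriv_fderiv
    have e2 : ‖iteratedFDeriv ℝ 2 (fderiv ℝ f) u‖ = ‖iteratedFDeriv ℝ 3 f u‖ :=
      norm_iteratedFDeriv_fderiv
    calc ‖fderiv ℝ h2 u‖ = ‖iteratedFDeriv ℝ 0 (fderiv ℝ h2) u‖ := by rw [norm_iteratedFDeriv_zero]
      _ = ‖iteratedFDeriv ℝ 1 h2 u‖ := e0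
      _ = ‖iteratedFDeriv ℝ 2 g u‖ := by rw [hh2def]; exact e1
      _ = ‖iteratedFDeriv ℝ 3 f u‖ := by rw [hgdef]; exact e2
      _ ≤ Kf := hD3 u
  have hstep1 : ∀ u : V, ‖h2 u‖ ≤ ‖h2 0‖ + Kf * ‖u‖ := by
    intro u
    have := convex_univ.norm_image_sub_le_of_norm_fderiv_le
      (fun x _ => (hdh x)) (fun x _ => key x) (Set.mem_univ (0:V)) (Set.mem_univ u)
    simp only [sub_zero] at this
    have := norm_sub_norm_le (h2 u) (h2 0)
    linarith [norm_sub_norm_le (h2 u) (h2 0),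
      convex_univ.norm_image_sub_le_of_norm_fderiv_le (fun x _ => (hdh x)) (fun x _ => key x)
        (Set.mem_univ (0:V)) (Set.mem_univ u)]
  have hstep2 : ∀ u : V, ‖g u‖ ≤ ‖g 0‖ + ‖h2 0‖ * ‖u‖ + Kf * ‖u‖^2 := by
    intro u
    have hb : ∀ x ∈ segment ℝ (0:V) u, ‖h2 x‖ ≤ ‖h2 0‖ + Kf * ‖u‖ := by
      intro x hx
      have hxn : ‖x‖ ≤ ‖(0:V)‖ + ‖u‖ := norm_mem_segment hx
      simp only [norm_zero, zero_add] at hxn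
      have := hstep1 x
      nlinarith
    have := (convex_segment (0:V) u).norm_image_sub_le_of_norm_fderiv_le
      (fun x _ => hdg x) hb (left_mem_segment ℝ 0 u) (right_mem_segment ℝ 0 u)
    simp only [sub_zero] at this
    nlinarith [norm_sub_norm_le (g u) (g 0), norm_nonneg u]
  have hstep3 : ∀ a b : V, ‖f b - f a‖ ≤
      (‖g 0‖ + ‖h2 0‖ * (‖a‖ + ‖b‖) + Kf * (‖a‖ + ‖b‖)^2) * ‖b - a‖ := by
    intro a b
    have hb : ∀ x ∈ segment ℝ a b,
        ‖g x‖ ≤ ‖g 0‖ + ‖h2 0‖ * (‖a‖ + ‖b‖) + Kf * (‖a‖ + ‖b‖)^2 := by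
      intro x hx
      have hxn : ‖x‖ ≤ ‖a‖ + ‖b‖ := norm_mem_segment hx
      have hx2 : ‖x‖^2 ≤ (‖a‖ + ‖b‖)^2 := by
        have := norm_nonneg x
        nlinarith
      have h1 := hstep2 x
      have h2' : ‖h2 0‖ * ‖x‖ ≤ ‖h2 0‖ * (‖a‖ + ‖b‖) :=
        mul_le_mul_of_nonneg_left hxn (norm_nonneg _)
      have h3' : Kf * ‖x‖^2 ≤ Kf * (‖a‖ + ‖b‖)^2 :=
        mul_le_mul_of_nonneg_left hx2 (le_of_lt hKf)
      linarith
    exact (convex_segment a b).norm_image_sub_le_of_norm_fderiv_le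
      (fun x _ => hdf x) hb (left_mem_segment ℝ a b) (right_mem_segment ℝ a b)
  have hG0 : (0:ℝ) ≤ ‖g 0‖ := norm_nonneg _
  have hH0 : (0:ℝ) ≤ ‖h2 0‖ := norm_nonneg _
  refine ⟨‖g 0‖ + ‖h2 0‖ + Kf, by linarith, fun a b => ?_⟩
  refine le_trans (hstep3 a b) (mul_le_mul_of_nonneg_right ?_ (norm_nonneg _))
  have hs : (0:ℝ) ≤ ‖a‖ + ‖b‖ := by
    have := norm_nonneg a; have := norm_nonneg b; linarith
  nlinarith [sq_nonneg (‖a‖ + ‖b‖)]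

variable {E : Type*} [NormedAddCommGroup E] [InnerProductSpace ℝ E]
variable {F : Type*} [NormedAddCommGroup F] [InnerProductSpace ℝ F]

lemma cs_inner {μ : Measure ℝ}
    {f g : ℝ → E} (hf : MemLp f 2 μ) (hg : MemLp g 2 μ) :
    |∫ ξ, (inner ℝ (f ξ) (g ξ) : ℝ) ∂μ| ≤ (eLpNorm f 2 μ).toReal * (eLpNorm g 2 μ).toReal := by
  haveI : Fact ((1:ℝ≥0∞) ≤ 2) := ⟨one_le_two⟩
  have h1 : (∫ ξ, (inner ℝ (f ξ) (g ξ) : ℝ) ∂μ) = inner ℝ (hf.toLp f) (hg.toLp g) := by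
    rw [MeasureTheory.L2.inner_def]
    apply integral_congr_ae
    filter_upwards [hf.coeFn_toLp, hg.coeFn_toLp] with x hx hy
    rw [hx, hy]
  rw [h1, ← MeasureTheory.Lp.norm_toLp f hf, ← MeasureTheory.Lp.norm_toLp g hg]
  exact abs_real_inner_le_norm _ _

lemma cs_norm {μ : Measure ℝ}
    {f : ℝ → E} {g : ℝ → F} (hf : MemLp f 2 μ) (hg : MemLp g 2 μ) :
    ∫ ξ, ‖f ξ‖ * ‖g ξ‖ ∂μ ≤ (eLpNorm f 2 μ).toReal * (eLpNorm g 2 μ).toReal := by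
  have := cs_inner (hf.norm) (hg.norm)
  simp only [RCLike.inner_apply, starRingEnd_apply, star_trivial] at this
  rw [eLpNorm_norm, eLpNorm_norm] at this
  rw [show (fun ξ => ‖f ξ‖ * ‖g ξ‖) = fun ξ => ‖g ξ‖ * ‖f ξ‖ from funext fun ξ => mul_comm _ _]
  exact (le_abs_self _).trans this

lemma integrable_norm_mul {μ : Measure ℝ}
    {f : ℝ → E} {g : ℝ → F} (hf : MemLp f 2 μ) (hg : MemLp g 2 μ) :
    Integrable (fun ξ => ‖f ξ‖ * ‖g ξ‖) μ := by
  haveI : Fact ((1:ℝ≥0∞) ≤ 2) := ⟨one_le_two⟩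
  have h := MeasureTheory.L2.integrable_inner (𝕜 := ℝ) ((hf.norm).toLp _) ((hg.norm).toLp _)
  apply h.congr
  filter_upwards [(hf.norm).coeFn_toLp, (hg.norm).coeFn_toLp] with x hx hy
  simp [hx, hy, RCLike.inner_apply, starRingEnd_apply]; ring

lemma integral_norm_sq {μ : Measure ℝ} {f : ℝ → E} (hf : MemLp f 2 μ) :
    ∫ ξ, ‖f ξ‖^2 ∂μ = ((eLpNorm f 2 μ).toReal)^2 := by
  haveI : Fact ((1:ℝ≥0∞) ≤ 2) := ⟨one_le_two⟩
  have h1 : (∫ ξ, (inner ℝ (f ξ) (f ξ) : ℝ) ∂μ) = inner ℝ (hf.toLp f) (hf.toLp f) := by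
    rw [MeasureTheory.L2.inner_def]
    apply integral_congr_ae
    filter_upwards [hf.coeFn_toLp] with x hx
    rw [hx]
  have h2 : (inner ℝ (hf.toLp f) (hf.toLp f) : ℝ) = ‖hf.toLp f‖^2 := real_inner_self_eq_norm_sq _
  rw [MeasureTheory.Lp.norm_toLp f hf] at h2
  calc ∫ ξ, ‖f ξ‖^2 ∂μ = ∫ ξ, (inner ℝ (f ξ) (f ξ) : ℝ) ∂μ := by
        apply integral_congr_ae; filter_upwards with x; rw [real_inner_self_eq_norm_sq]
    _ = _ := by rw [h1, h2]


omit [InnerProductSpace ℝ E] [InnerProductSpace ℝ F] in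
lemma dummy_omit_reset : True := trivial

lemma auxa {x y : ℝ} (hx : 0 ≤ x) (hxy : x ≤ y) : x ≤ 1 + y^2*x := by
  rcases le_or_gt x 1 with h | h
  · nlinarith
  · nlinarith
lemma auxb {x y : ℝ} (hx : 0 ≤ x) (hy : 0 ≤ y) (hxy : x ≤ y) : x*y ≤ 1 + y^2*x := by
  rcases le_or_gt (x*y) 1 with h | h
  · nlinarith
  · nlinarith
lemma auxc {x y : ℝ} (hx : 0 ≤ x) (hxy : x ≤ y) : x^2 ≤ 1 + y*x^2 := by
  rcases le_or_gt x 1 with h | h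
  · nlinarith
  · nlinarith
lemma auxd {x y : ℝ} (hx : 0 ≤ x) (hxy : x ≤ y) : x ≤ 1 + y*x^2 := by
  rcases le_or_gt x 1 with h | h
  · nlinarith
  · nlinarith

lemma two_sqrt_le {a b : ℝ} (ha : 0 ≤ a) (hb : 0 ≤ b) :
    2 * Real.sqrt (a * b) ≤ Real.sqrt 2 * Real.sqrt (a^2 + b^2) := by
  have h4 : Real.sqrt 4 = 2 := by
    rw [show (4:ℝ) = 2^2 by norm_num, Real.sqrt_sq (by norm_num)]
  calc 2 * Real.sqrt (a * b) = Real.sqrt (4 * (a * b)) := by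
        rw [Real.sqrt_mul (by norm_num : (0:ℝ) ≤ 4) (a*b), h4]
    _ ≤ Real.sqrt (2 * (a^2 + b^2)) := Real.sqrt_le_sqrt (by nlinarith [sq_nonneg (a-b)])
    _ = Real.sqrt 2 * Real.sqrt (a^2 + b^2) := Real.sqrt_mul (by norm_num : (0:ℝ) ≤ 2) _

lemma sqrt_sq_le_left {a b : ℝ} (ha : 0 ≤ a) (hb : 0 ≤ b) : a ≤ Real.sqrt (a^2 + b^2) := by
  rw [show a = Real.sqrt (a^2) by rw [Real.sqrt_sq ha]]
  exact Real.sqrt_le_sqrt (by nlinarith [Real.sq_sqrt (by positivity : (0:ℝ) ≤ a^2)])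

lemma eLpNorm_toReal_add_le {α E : Type*} [MeasurableSpace α] {μ : Measure α}
    [NormedAddCommGroup E] {F G : α → E} (hF : MemLp F 2 μ) (hG : MemLp G 2 μ) :
    (eLpNorm (fun ξ => F ξ + G ξ) 2 μ).toReal ≤
      (eLpNorm F 2 μ).toReal + (eLpNorm G 2 μ).toReal := by
  have h := eLpNorm_add_le hF.aestronglyMeasurable hG.aestronglyMeasurable one_le_two
  have hfin : eLpNorm F 2 μ + eLpNorm G 2 μ ≠ ⊤ := ENNReal.add_ne_top.mpr ⟨hF.2.ne, hG.2.ne⟩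
  have := ENNReal.toReal_mono hfin h
  rwa [ENNReal.toReal_add hF.2.ne hG.2.ne] at this

lemma eLpNorm_toReal_const_mul {α : Type*} [MeasurableSpace α] {μ : Measure α}
    (D : ℝ) (r : α → ℝ) :
    (eLpNorm (fun ξ => D * r ξ) 2 μ).toReal = |D| * (eLpNorm r 2 μ).toReal := by
  have : (fun ξ => D * r ξ) = D • r := by funext ξ; simp [smul_eq_mul]
  rw [this, eLpNorm_const_smul]
  simp [ENNReal.toReal_mul, Real.norm_eq_abs]

lemma eLpNorm_toReal_mono {α E : Type*} [MeasurableSpace α] {μ : Measure α}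
    [NormedAddCommGroup E] {F : α → E} {G : α → ℝ} (hG : MemLp G 2 μ)
    (h : ∀ ξ, ‖F ξ‖ ≤ G ξ) :
    (eLpNorm F 2 μ).toReal ≤ (eLpNorm G 2 μ).toReal :=
  ENNReal.toReal_mono hG.2.ne (eLpNorm_mono_real h)

lemma wd_continuous {n : ℕ} {v v' : ℝ → En n} (h : hasWeakDeriv v v') : Continuous v := by
  have hint : ∀ a b : ℝ, IntervalIntegrable v' volume a b := fun a b =>
    (h.1.integrableOn_isCompact isCompact_uIcc).intervalIntegrable
  have hc : Continuous fun y => ∫ t in (0:ℝ)..y, v' t :=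
    intervalIntegral.continuous_primitive hint 0
  have hv : v = fun y => v 0 + ∫ t in (0:ℝ)..y, v' t := by
    funext y
    have := h.2 0 y
    rw [← this]; abel
  rw [hv]
  exact continuous_const.add hc

lemma cs_norm' {E F : Type*} [NormedAddCommGroup E] [InnerProductSpace ℝ E]
    [NormedAddCommGroup F] [InnerProductSpace ℝ F] {μ : Measure ℝ}
    {f : ℝ → E} {g : ℝ → F} (hf : MemLp f 2 μ) (hg : MemLp g 2 μ) :
    ∫ ξ, ‖f ξ‖ * ‖g ξ‖ ∂μ ≤ (eLpNorm f 2 μ).toReal * (eLpNorm g 2 μ).toReal := by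
  haveI : Fact ((1:ℝ≥0∞) ≤ 2) := ⟨one_le_two⟩
  have key : |∫ ξ, ((‖f ξ‖ : ℝ) * ‖g ξ‖) ∂μ| ≤
      (eLpNorm (fun ξ => ‖f ξ‖) 2 μ).toReal * (eLpNorm (fun ξ => ‖g ξ‖) 2 μ).toReal := by
    have h1 : (∫ ξ, ((‖f ξ‖ : ℝ) * ‖g ξ‖) ∂μ) =
        inner ℝ ((hf.norm).toLp _) ((hg.norm).toLp _) := by
      rw [MeasureTheory.L2.inner_def]
      apply integral_congr_ae
      filter_upwards [(hf.norm).coeFn_toLp, (hg.norm).coeFn_toLp] with x hx hy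
      simp [hx, hy, RCLike.inner_apply, starRingEnd_apply]; ring
    rw [h1, ← MeasureTheory.Lp.norm_toLp _ hf.norm, ← MeasureTheory.Lp.norm_toLp _ hg.norm]
    exact abs_real_inner_le_norm _ _
  rw [eLpNorm_norm, eLpNorm_norm] at key
  exact (le_abs_self _).trans key

lemma setIntegral_norm_le_sqrt {n : ℕ} {u : ℝ → En n} (hu : memL2 u) (A B : ℝ) (hAB : A < B) :
    ∫ t in Set.Icc A B, ‖u t‖ ≤ Real.sqrt (B - A) * l2norm u := by
  set μ := volume.restrict (Set.Icc A B) with hμdef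
  have hμuniv : μ Set.univ = ENNReal.ofReal (B - A) := by
    rw [hμdef, Measure.restrict_apply_univ, Real.volume_Icc]
  have hμ0 : μ ≠ 0 := by
    rw [← Measure.measure_univ_ne_zero, hμuniv]
    simp only [ne_eq, ENNReal.ofReal_eq_zero, not_le]
    linarith
  have huμ : MemLp u 2 μ := hu.restrict _
  haveI : IsFiniteMeasure μ := ⟨by rw [hμuniv]; exact ofReal_lt_top⟩
  have h1 : MemLp (fun _ : ℝ => (1:ℝ)) 2 μ := memLp_const 1
  have hcs := cs_norm' huμ h1
  simp only [norm_one, mul_one] at hcs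
  have hconst : eLpNorm (fun _ : ℝ => (1:ℝ)) 2 μ = (ENNReal.ofReal (B - A)) ^ (1/2 : ℝ) := by
    rw [eLpNorm_const (1:ℝ) (by norm_num) hμ0, hμuniv]
    simp
  have hconst' : (eLpNorm (fun _ : ℝ => (1:ℝ)) 2 μ).toReal = Real.sqrt (B - A) := by
    rw [hconst, ← ENNReal.toReal_rpow, ENNReal.toReal_ofReal (by linarith),
      Real.sqrt_eq_rpow]
  have hmono : (eLpNorm u 2 μ).toReal ≤ l2norm u :=
    ENNReal.toReal_mono hu.2.ne (eLpNorm_mono_measure u Measure.restrict_le_self)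
  calc ∫ t in Set.Icc A B, ‖u t‖ ≤ (eLpNorm u 2 μ).toReal * (eLpNorm (fun _ : ℝ => (1:ℝ)) 2 μ).toReal := hcs
    _ = (eLpNorm u 2 μ).toReal * Real.sqrt (B - A) := by rw [hconst']
    _ ≤ l2norm u * Real.sqrt (B - A) := by
        apply mul_le_mul_of_nonneg_right hmono (Real.sqrt_nonneg _)
    _ = Real.sqrt (B - A) * l2norm u := mul_comm _ _

-- sup bound
lemma sup_bound {n : ℕ} {v v' : ℝ → En n} (h : memH1 v v') (ξ : ℝ) :
    ‖v ξ‖ ≤ 2 * Real.sqrt (l2norm v * l2norm v') := by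
  obtain ⟨hwd, hv2, hv'2⟩ := h
  set a := l2norm v with hadef
  set b := l2norm v' with hbdef
  have ha : 0 ≤ a := ENNReal.toReal_nonneg
  have hb : 0 ≤ b := ENNReal.toReal_nonneg
  have hcont : Continuous v := wd_continuous hwd
  have step : ∀ L : ℝ, 0 < L → ‖v ξ‖ ≤ a / Real.sqrt L + Real.sqrt L * b := by
    intro L hL
    set I := Set.Icc (ξ - L) ξ with hIdef
    have hIvol : volume I = ENNReal.ofReal L := by
      rw [hIdef, Real.volume_Icc]; congr 1; ring
    have hI'int : IntegrableOn (fun s => ‖v' s‖) I volume :=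
      (hwd.1.integrableOn_isCompact isCompact_Icc).norm
    have hpt : ∀ t ∈ I, ‖v ξ‖ ≤ ‖v t‖ + ∫ s in I, ‖v' s‖ := by
      intro t ht
      obtain ⟨ht1, ht2⟩ := ht
      have hid : v ξ - v t = ∫ s in t..ξ, v' s := hwd.2 t ξ
      have h1 : ‖v ξ - v t‖ ≤ ∫ s in Set.uIoc t ξ, ‖v' s‖ := by
        rw [hid]; exact intervalIntegral.norm_integral_le_integral_norm_uIoc
      have h2 : ∫ s in Set.uIoc t ξ, ‖v' s‖ ≤ ∫ s in I, ‖v' s‖ := by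
        apply setIntegral_mono_set hI'int
        · filter_upwards with x using norm_nonneg _
        · apply HasSubset.Subset.eventuallyLE
          rw [Set.uIoc_of_le ht2]
          exact (Set.Ioc_subset_Icc_self).trans (Set.Icc_subset_Icc_left ht1)
      calc ‖v ξ‖ ≤ ‖v t‖ + ‖v ξ - v t‖ := by
            have := norm_add_le (v t) (v ξ - v t); simpa using this
        _ ≤ ‖v t‖ + ∫ s in I, ‖v' s‖ := by linarith
    -- integrate over t ∈ I
    have hvint : IntegrableOn (fun t => ‖v t‖) I volume :=
      (hcont.norm.continuousOn).integrableOn_compact isCompact_Icc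
    have hconstint : IntegrableOn (fun _ : ℝ => ∫ s in I, ‖v' s‖) I volume := by
      exact integrableOn_const (by rw [hIvol]; exact ofReal_ne_top)
    have hsum : IntegrableOn (fun t => ‖v t‖ + ∫ s in I, ‖v' s‖) I volume :=
      hvint.add hconstint
    have hmono := setIntegral_mono_on (integrableOn_const (by rw [hIvol]; exact ofReal_ne_top)) hsum measurableSet_Icc hpt
    rw [setIntegral_const] at hmono
    rw [integral_add hvint hconstint, setIntegral_const] at hmono
    have hIvol' : volume.real I = L := by rw [measureReal_def, hIvol, ENNReal.toReal_ofReal hL.le]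
    rw [hIvol'] at hmono
    simp only [smul_eq_mul] at hmono
    have hCS1 : ∫ t in I, ‖v t‖ ≤ Real.sqrt L * a := by
      have := setIntegral_norm_le_sqrt hv2 (ξ - L) ξ (by linarith)
      simpa using this
    have hCS2 : ∫ s in I, ‖v' s‖ ≤ Real.sqrt L * b := by
      have := setIntegral_norm_le_sqrt hv'2 (ξ - L) ξ (by linarith)
      simpa using this
    have hsL : 0 < Real.sqrt L := Real.sqrt_pos.mpr hL
    have hLs : Real.sqrt L * Real.sqrt L = L := Real.mul_self_sqrt hL.le
    -- L * ‖v ξ‖ ≤ √L a + L * (√L b)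
    have : L * ‖v ξ‖ ≤ Real.sqrt L * a + L * (Real.sqrt L * b) := by
      have h2' : L * (∫ s in I, ‖v' s‖) ≤ L * (Real.sqrt L * b) :=
        mul_le_mul_of_nonneg_left hCS2 hL.le
      linarith
    have hgoal : L * ‖v ξ‖ ≤ L * (a / Real.sqrt L + Real.sqrt L * b) := by
      have hrw : L * (a / Real.sqrt L + Real.sqrt L * b)
          = Real.sqrt L * a + L * (Real.sqrt L * b) := by
        rw [mul_add]
        congr 1
        field_simp
        linear_combination a * hLs.symm
      rw [hrw]
      exact this
    exact le_of_mul_le_mul_left hgoal hL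
  have key : ∀ ε > (0:ℝ), ‖v ξ‖ ≤ 2 * Real.sqrt (a * b) + ε := by
    intro ε hε
    have hnn : 0 ≤ 2 * Real.sqrt (a*b) := by positivity
    rcases eq_or_lt_of_le hb with hb0 | hbpos
    · have hL : (0:ℝ) < ((a + 1)/ε)^2 := by positivity
      have hst := step _ hL
      rw [Real.sqrt_sq (by positivity), ← hb0] at hst
      have h2 : a / ((a+1)/ε) ≤ ε := by
        rw [div_div_eq_mul_div, div_le_iff₀ (by positivity)]
        nlinarith
      simp only [mul_zero, add_zero] at hst
      linarith
    · rcases eq_or_lt_of_le ha with ha0 | hapos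
      · have hL : (0:ℝ) < (ε/b)^2 := by positivity
        have hst := step _ hL
        rw [Real.sqrt_sq (by positivity), ← ha0] at hst
        simp only [zero_div, zero_add] at hst
        rw [div_mul_cancel₀ _ (ne_of_gt hbpos)] at hst
        linarith
      · have hL : (0:ℝ) < a / b := by positivity
        have hst := step _ hL
        have hsa : 0 < Real.sqrt a := Real.sqrt_pos.mpr hapos
        have hsb : 0 < Real.sqrt b := Real.sqrt_pos.mpr hbpos
        have ea : Real.sqrt a * Real.sqrt a = a := Real.mul_self_sqrt hapos.le
        have eb : Real.sqrt b * Real.sqrt b = b := Real.mul_self_sqrt hbpos.le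
        have hab : Real.sqrt (a*b) = Real.sqrt a * Real.sqrt b := Real.sqrt_mul hapos.le b
        rw [Real.sqrt_div hapos.le b] at hst
        have e1 : a / (Real.sqrt a / Real.sqrt b) = Real.sqrt a * Real.sqrt b := by
          rw [div_div_eq_mul_div, div_eq_iff hsa.ne']
          linear_combination (-Real.sqrt b) * ea
        have e2 : (Real.sqrt a / Real.sqrt b) * b = Real.sqrt a * Real.sqrt b := by
          rw [div_mul_eq_mul_div, div_eq_iff hsb.ne']
          linear_combination (-Real.sqrt a) * eb
        rw [e1, e2] at hst
        rw [hab]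
        linarith
  -- conclude
  by_contra hcon
  push_neg at hcon
  have := key ((‖v ξ‖ - 2 * Real.sqrt (a*b))/2) (by linarith)
  linarith

set_option maxHeartbeats 2000000 in
theorem statement1 {n : ℕ} (hn : 1 ≤ n) (f : En n → En n)
    (hf : ContDiff ℝ 3 f) (Kf : ℝ) (hKf : 0 < Kf)
    (hD3 : ∀ u : En n, ‖iteratedFDeriv ℝ 3 f u‖ ≤ Kf)
    (Φ₀ : ℝ → En n) (hΦ₀C1 : ContDiff ℝ 1 Φ₀)
    (hΦ₀bdd : ∃ B : ℝ, ∀ ξ, ‖Φ₀ ξ‖ ≤ B)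
    (hΦ₀' : memL2 (deriv Φ₀))
    (hfΦ₀ : memL2 (fun ξ => f (Φ₀ ξ))) :
    ∃ K > (0:ℝ),
      ∀ p p' : ℝ → En n, memH1 p p' → h1norm p p' ≤ 1 →
      ∀ v v' : ℝ → En n, memH1 v v' →
      ∀ ψ ψ' : ℝ → En n, memH1 ψ ψ' →
        l2norm (fun ξ => f (Φ₀ ξ + p ξ + v ξ)) ≤
          K * (1 + (h1norm v v')^2 * l2norm v) ∧
        |l2inner (fun ξ => f (Φ₀ ξ + p ξ + v ξ)) ψ| ≤
          K * (1 + h1norm v v' * (l2norm v)^2) * h1norm ψ ψ' := by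
  obtain ⟨B, hB⟩ := hΦ₀bdd
  have hB0 : 0 ≤ B := le_trans (norm_nonneg _) (hB 0)
  obtain ⟨C, hC, hgrow⟩ := growth f hf Kf hKf hD3
  have hfΦ₀' : MemLp (fun ξ => f (Φ₀ ξ)) 2 volume := hfΦ₀
  set A := l2norm (fun ξ => f (Φ₀ ξ)) with hAdef
  have hA0 : 0 ≤ A := ENNReal.toReal_nonneg
  have hs2 : Real.sqrt 2 * Real.sqrt 2 = 2 := Real.mul_self_sqrt (by norm_num)
  have hs20 : 0 ≤ Real.sqrt 2 := Real.sqrt_nonneg 2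
  set c : ℝ := 1 + 2*B + Real.sqrt 2 with hcdef
  have hc1 : (1:ℝ) ≤ c := by rw [hcdef]; linarith
  refine ⟨20*(A + C*c^2 + C + 1), by positivity, ?_⟩
  intro p p' hp hp1 v v' hv ψ ψ' hψ
  have hp2 : MemLp p 2 volume := hp.2.1
  have hv2 : MemLp v 2 volume := hv.2.1
  have hv'2 : MemLp v' 2 volume := hv.2.2
  have hψ2 : MemLp ψ 2 volume := hψ.2.1
  set N := h1norm v v' with hNdef
  set a := l2norm v with hadef
  set b := l2norm v' with hbdef
  set P := l2norm p with hPdef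
  set Nψ := h1norm ψ ψ' with hNψdef
  set Ψ := l2norm ψ with hΨdef
  have ha0 : 0 ≤ a := ENNReal.toReal_nonneg
  have hb0 : 0 ≤ b := ENNReal.toReal_nonneg
  have hP0 : 0 ≤ P := ENNReal.toReal_nonneg
  have hΨ0 : 0 ≤ Ψ := ENNReal.toReal_nonneg
  have hN0 : 0 ≤ N := Real.sqrt_nonneg _
  have hNψ0 : 0 ≤ Nψ := Real.sqrt_nonneg _
  have hNeq : N = Real.sqrt (a^2 + b^2) := rfl
  have haN : a ≤ N := by rw [hNeq]; exact sqrt_sq_le_left ha0 hb0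
  have hbN : b ≤ N := by
    rw [hNeq, add_comm (a^2)]; exact sqrt_sq_le_left hb0 ha0
  have hPle : P ≤ 1 := by
    refine le_trans ?_ hp1
    exact sqrt_sq_le_left hP0 ENNReal.toReal_nonneg
  have hΨle : Ψ ≤ Nψ := sqrt_sq_le_left hΨ0 ENNReal.toReal_nonneg
  -- sup bounds
  have hsupv : ∀ ξ, ‖v ξ‖ ≤ Real.sqrt 2 * N := by
    intro ξ
    refine (sup_bound hv ξ).trans ?_
    rw [hNeq]; exact two_sqrt_le ha0 hb0
  have hsupv2 : ∀ ξ, ‖v ξ‖^2 ≤ 4*(a*N) := by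
    intro ξ
    have h := sup_bound hv ξ
    have h1 : ‖v ξ‖^2 ≤ (2*Real.sqrt (a*b))^2 := by
      nlinarith [norm_nonneg (v ξ), Real.sqrt_nonneg (a*b)]
    have h2 : (2*Real.sqrt (a*b))^2 = 4*(a*b) := by
      rw [mul_pow, Real.sq_sqrt (mul_nonneg ha0 hb0)]; norm_num
    nlinarith [hbN, ha0]
  have hsupp : ∀ ξ, ‖p ξ‖ ≤ Real.sqrt 2 := by
    intro ξ
    refine (sup_bound hp ξ).trans ?_
    have h1 : 2*Real.sqrt (l2norm p * l2norm p') ≤ Real.sqrt 2 * h1norm p p' :=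
      two_sqrt_le hP0 ENNReal.toReal_nonneg
    nlinarith [hp1, hs20, Real.sqrt_nonneg ((l2norm p)^2 + (l2norm p')^2)]
  have hsupψ : ∀ ξ, ‖ψ ξ‖ ≤ Real.sqrt 2 * Nψ := by
    intro ξ
    refine (sup_bound hψ ξ).trans ?_
    exact two_sqrt_le hΨ0 ENNReal.toReal_nonneg
  -- continuity and measurability
  have hpc : Continuous p := wd_continuous hp.1
  have hvc : Continuous v := wd_continuous hv.1
  have hwc : Continuous (fun ξ => Φ₀ ξ + p ξ + v ξ) := (hΦ₀C1.continuous.add hpc).add hvc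
  have hfwm : AEStronglyMeasurable (fun ξ => f (Φ₀ ξ + p ξ + v ξ)) volume :=
    ((hf.continuous).comp hwc).aestronglyMeasurable
  -- master pointwise estimate
  have hmaster : ∀ ξ, ‖f (Φ₀ ξ + p ξ + v ξ)‖ ≤ ‖f (Φ₀ ξ)‖
      + 2*C*c^2*(‖p ξ‖ + ‖v ξ‖) + 2*C*‖v ξ‖^2*(‖p ξ‖ + ‖v ξ‖) := by
    intro ξ
    have hg := hgrow (Φ₀ ξ) (Φ₀ ξ + p ξ + v ξ)
    have hdiff : (Φ₀ ξ + p ξ + v ξ) - Φ₀ ξ = p ξ + v ξ := by abel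
    rw [hdiff] at hg
    have htri : ‖f (Φ₀ ξ + p ξ + v ξ)‖ - ‖f (Φ₀ ξ)‖ ≤ ‖f (Φ₀ ξ + p ξ + v ξ) - f (Φ₀ ξ)‖ :=
      norm_sub_norm_le _ _
    have hcoef : 1 + ‖Φ₀ ξ‖ + ‖Φ₀ ξ + p ξ + v ξ‖ ≤ c + ‖v ξ‖ := by
      have h1 : ‖Φ₀ ξ + p ξ + v ξ‖ ≤ ‖Φ₀ ξ‖ + ‖p ξ‖ + ‖v ξ‖ := norm_add₃_le
      have h2 := hB ξ
      have h3 := hsupp ξ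
      rw [hcdef]; linarith
    have hbase : (0:ℝ) ≤ 1 + ‖Φ₀ ξ‖ + ‖Φ₀ ξ + p ξ + v ξ‖ := by
      have := norm_nonneg (Φ₀ ξ); have := norm_nonneg (Φ₀ ξ + p ξ + v ξ); linarith
    have hsq : (1 + ‖Φ₀ ξ‖ + ‖Φ₀ ξ + p ξ + v ξ‖)^2 ≤ 2*c^2 + 2*‖v ξ‖^2 := by
      nlinarith [sq_nonneg (c - ‖v ξ‖), hcoef, hbase]
    have hnpv : ‖p ξ + v ξ‖ ≤ ‖p ξ‖ + ‖v ξ‖ := norm_add_le _ _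
    have hnpv0 : (0:ℝ) ≤ ‖p ξ + v ξ‖ := norm_nonneg _
    have h1 : C * (1 + ‖Φ₀ ξ‖ + ‖Φ₀ ξ + p ξ + v ξ‖)^2 * ‖p ξ + v ξ‖
        ≤ C * (2*c^2 + 2*‖v ξ‖^2) * (‖p ξ‖ + ‖v ξ‖) := by
      have hcc : C * (1 + ‖Φ₀ ξ‖ + ‖Φ₀ ξ + p ξ + v ξ‖)^2 ≤ C * (2*c^2 + 2*‖v ξ‖^2) :=
        mul_le_mul_of_nonneg_left hsq hC.le
      have hcc0 : (0:ℝ) ≤ C * (2*c^2 + 2*‖v ξ‖^2) := by positivity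
      exact mul_le_mul hcc hnpv hnpv0 hcc0
    linarith [hg, htri, h1]
  -- shared L² facts
  have h2cc : (0:ℝ) ≤ 2*C*c^2 := by
    have := mul_nonneg hC.le (sq_nonneg c); linarith
  have haN0 : 0 ≤ a*N := mul_nonneg ha0 hN0
  have hD0 : (0:ℝ) ≤ 2*C*c^2 + 8*C*(a*N) := by
    have := mul_nonneg hC.le haN0; linarith
  have hpt1 : ∀ ξ, ‖f (Φ₀ ξ + p ξ + v ξ)‖
      ≤ ‖f (Φ₀ ξ)‖ + (2*C*c^2 + 8*C*(a*N))*(‖p ξ‖ + ‖v ξ‖) := by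
    intro ξ
    have hm := hmaster ξ
    have h2 := hsupv2 ξ
    have hsnn : (0:ℝ) ≤ ‖p ξ‖ + ‖v ξ‖ := by positivity
    have h3 : ‖v ξ‖^2 * (‖p ξ‖ + ‖v ξ‖) ≤ 4*(a*N) * (‖p ξ‖ + ‖v ξ‖) :=
      mul_le_mul_of_nonneg_right h2 hsnn
    have h4 : C * (‖v ξ‖^2 * (‖p ξ‖ + ‖v ξ‖)) ≤ C * (4*(a*N) * (‖p ξ‖ + ‖v ξ‖)) :=
      mul_le_mul_of_nonneg_left h3 hC.le
    linarith [hm, h4]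
  have hGmem : MemLp (fun ξ => ‖f (Φ₀ ξ)‖ + (2*C*c^2 + 8*C*(a*N))*(‖p ξ‖ + ‖v ξ‖)) 2 volume := by
    have h1 : MemLp (fun ξ => ‖p ξ‖ + ‖v ξ‖) 2 volume := hp2.norm.add hv2.norm
    exact hfΦ₀'.norm.add (h1.const_mul _)
  have hfw2 : MemLp (fun ξ => f (Φ₀ ξ + p ξ + v ξ)) 2 volume := by
    apply MemLp.of_le hGmem hfwm
    filter_upwards with ξ
    refine (hpt1 ξ).trans ?_
    rw [Real.norm_eq_abs]
    apply le_abs_self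
  have hchain : l2norm (fun ξ => f (Φ₀ ξ + p ξ + v ξ)) ≤ A + (2*C*c^2 + 8*C*(a*N))*(P + a) := by
    have s1 : (eLpNorm (fun ξ => f (Φ₀ ξ + p ξ + v ξ)) 2 volume).toReal
        ≤ (eLpNorm (fun ξ => ‖f (Φ₀ ξ)‖ + (2*C*c^2 + 8*C*(a*N))*(‖p ξ‖ + ‖v ξ‖)) 2 volume).toReal :=
      eLpNorm_toReal_mono hGmem hpt1
    have s2 : (eLpNorm (fun ξ => ‖f (Φ₀ ξ)‖ + (2*C*c^2 + 8*C*(a*N))*(‖p ξ‖ + ‖v ξ‖)) 2 volume).toReal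
        ≤ (eLpNorm (fun ξ => ‖f (Φ₀ ξ)‖) 2 volume).toReal
          + (eLpNorm (fun ξ => (2*C*c^2 + 8*C*(a*N))*(‖p ξ‖ + ‖v ξ‖)) 2 volume).toReal :=
      eLpNorm_toReal_add_le hfΦ₀'.norm ((hp2.norm.add hv2.norm).const_mul _)
    have s3 : (eLpNorm (fun ξ => (2*C*c^2 + 8*C*(a*N))*(‖p ξ‖ + ‖v ξ‖)) 2 volume).toReal
        = |2*C*c^2 + 8*C*(a*N)| * (eLpNorm (fun ξ => ‖p ξ‖ + ‖v ξ‖) 2 volume).toReal :=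
      eLpNorm_toReal_const_mul _ _
    have s4 : (eLpNorm (fun ξ => ‖p ξ‖ + ‖v ξ‖) 2 volume).toReal ≤ P + a := by
      have h := eLpNorm_toReal_add_le hp2.norm hv2.norm
      rw [eLpNorm_norm, eLpNorm_norm] at h
      exact h
    have s5 : (eLpNorm (fun ξ => ‖f (Φ₀ ξ)‖) 2 volume).toReal = A := by
      rw [eLpNorm_norm, hAdef]
      rfl
    have s6 : (eLpNorm (fun ξ => ‖p ξ‖ + ‖v ξ‖) 2 volume).toReal ≥ 0 := ENNReal.toReal_nonneg
    calc l2norm (fun ξ => f (Φ₀ ξ + p ξ + v ξ)) ≤ _ := s1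
      _ ≤ _ := s2
      _ = A + |2*C*c^2 + 8*C*(a*N)| * (eLpNorm (fun ξ => ‖p ξ‖ + ‖v ξ‖) 2 volume).toReal := by
          rw [s3, s5]
      _ ≤ A + (2*C*c^2 + 8*C*(a*N))*(P + a) := by
          rw [abs_of_nonneg hD0]
          have := mul_le_mul_of_nonneg_left s4 hD0
          linarith
  constructor
  · -- Part 1: final algebra
    refine hchain.trans ?_
    have k1 : a ≤ 1 + N^2*a := auxa ha0 haN
    have k2 : a*N ≤ 1 + N^2*a := auxb ha0 hN0 haN
    have k3 : a*(a*N) ≤ N*(a*N) := mul_le_mul_of_nonneg_right haN haN0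
    have hN2a0 : (0:ℝ) ≤ N^2*a := mul_nonneg (sq_nonneg N) ha0
    have hT1 : (1:ℝ) ≤ 1 + N^2*a := by linarith
    have hT0 : (0:ℝ) ≤ 1 + N^2*a := by linarith
    have e1 : (2*C*c^2 + 8*C*(a*N))*(P + a) ≤ (2*C*c^2 + 8*C*(a*N))*(1 + a) :=
      mul_le_mul_of_nonneg_left (by linarith) hD0
    have t1 : 2*C*c^2*a ≤ 2*C*c^2*(1 + N^2*a) := mul_le_mul_of_nonneg_left k1 h2cc
    have t2 : 8*C*(a*N) ≤ 8*C*(1 + N^2*a) := by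
      have := mul_le_mul_of_nonneg_left k2 hC.le
      linarith [this]
    have t3 : 8*C*(a*(a*N)) ≤ 8*C*(N*(a*N)) := by
      have := mul_le_mul_of_nonneg_left k3 hC.le
      linarith [this]
    have big : A + (2*C*c^2 + 8*C*(a*N))*(P + a) ≤ (A + 4*C*c^2 + 16*C)*(1 + N^2*a) := by
      have p1 : A*1 ≤ A*(1 + N^2*a) := mul_le_mul_of_nonneg_left hT1 hA0
      have p2 : 2*C*c^2*1 ≤ 2*C*c^2*(1 + N^2*a) := mul_le_mul_of_nonneg_left hT1 h2cc
      have p3 : (0:ℝ) ≤ C*(N^2*a) := mul_nonneg hC.le hN2a0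
      have p4 : (0:ℝ) ≤ C*c^2*(N^2*a) := mul_nonneg (mul_nonneg hC.le (sq_nonneg c)) hN2a0
      linarith [e1, t1, t2, t3, p1, p2, p3, p4, hC.le]
    refine big.trans ?_
    have hcoef : A + 4*C*c^2 + 16*C ≤ 20*(A + C*c^2 + C + 1) := by
      have := mul_nonneg hC.le (sq_nonneg c)
      linarith [hA0, hC.le, this]
    exact mul_le_mul_of_nonneg_right hcoef hT0
  · -- Part 2: inner product bound
    have habs : |l2inner (fun ξ => f (Φ₀ ξ + p ξ + v ξ)) ψ|
        ≤ ∫ ξ, ‖f (Φ₀ ξ + p ξ + v ξ)‖ * ‖ψ ξ‖ := by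
      have h0 : l2inner (fun ξ => f (Φ₀ ξ + p ξ + v ξ)) ψ
          = ∫ ξ, (inner ℝ (f (Φ₀ ξ + p ξ + v ξ)) (ψ ξ) : ℝ) := rfl
      rw [h0]
      have h1 : |∫ ξ, (inner ℝ (f (Φ₀ ξ + p ξ + v ξ)) (ψ ξ) : ℝ)|
          ≤ ∫ ξ, |(inner ℝ (f (Φ₀ ξ + p ξ + v ξ)) (ψ ξ) : ℝ)| := by
        simpa [Real.norm_eq_abs] using
          norm_integral_le_integral_norm (μ := volume)
            (fun ξ => (inner ℝ (f (Φ₀ ξ + p ξ + v ξ)) (ψ ξ) : ℝ))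
      refine h1.trans ?_
      apply integral_mono_of_nonneg
      · filter_upwards with ξ using abs_nonneg _
      · exact integrable_norm_mul hfw2 hψ2
      · filter_upwards with ξ using abs_real_inner_le_norm _ _
    set M := Real.sqrt 2 + Real.sqrt 2 * N with hMdef
    have hM0 : 0 ≤ M := by
      have := mul_nonneg hs20 hN0
      rw [hMdef]; linarith
    have hpt2 : ∀ ξ, ‖f (Φ₀ ξ + p ξ + v ξ)‖ * ‖ψ ξ‖
        ≤ ‖f (Φ₀ ξ)‖*‖ψ ξ‖ + 2*C*c^2*(‖p ξ‖*‖ψ ξ‖) + 2*C*c^2*(‖v ξ‖*‖ψ ξ‖)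
          + (2*C*(M*(Real.sqrt 2 * Nψ)))*‖v ξ‖^2 := by
      intro ξ
      have hm := mul_le_mul_of_nonneg_right (hmaster ξ) (norm_nonneg (ψ ξ))
      have h4 : ‖p ξ‖ + ‖v ξ‖ ≤ M := by
        rw [hMdef]; linarith [hsupp ξ, hsupv ξ]
      have h5 := hsupψ ξ
      have h6 : (‖p ξ‖ + ‖v ξ‖)*‖ψ ξ‖ ≤ M*(Real.sqrt 2*Nψ) :=
        mul_le_mul h4 h5 (norm_nonneg _) hM0
      have hcv : (0:ℝ) ≤ 2*C*‖v ξ‖^2 := by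
        have := mul_nonneg hC.le (sq_nonneg (‖v ξ‖)); linarith
      have h7 : 2*C*‖v ξ‖^2 * ((‖p ξ‖ + ‖v ξ‖)*‖ψ ξ‖) ≤ 2*C*‖v ξ‖^2 * (M*(Real.sqrt 2*Nψ)) :=
        mul_le_mul_of_nonneg_left h6 hcv
      linarith [hm, h7]
    have i1 : Integrable (fun ξ => ‖f (Φ₀ ξ)‖*‖ψ ξ‖) volume := integrable_norm_mul hfΦ₀' hψ2
    have i2 : Integrable (fun ξ => ‖p ξ‖*‖ψ ξ‖) volume := integrable_norm_mul hp2 hψ2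
    have i3 : Integrable (fun ξ => ‖v ξ‖*‖ψ ξ‖) volume := integrable_norm_mul hv2 hψ2
    have i4 : Integrable (fun ξ => ‖v ξ‖^2) volume := by
      have h := integrable_norm_mul hv2 hv2
      simpa [pow_two] using h
    have iLHS : Integrable (fun ξ => ‖f (Φ₀ ξ + p ξ + v ξ)‖ * ‖ψ ξ‖) volume :=
      integrable_norm_mul hfw2 hψ2
    have hsplit : ∫ ξ, ‖f (Φ₀ ξ + p ξ + v ξ)‖ * ‖ψ ξ‖
        ≤ (∫ ξ, ‖f (Φ₀ ξ)‖*‖ψ ξ‖) + 2*C*c^2*(∫ ξ, ‖p ξ‖*‖ψ ξ‖)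
          + 2*C*c^2*(∫ ξ, ‖v ξ‖*‖ψ ξ‖) + (2*C*(M*(Real.sqrt 2 * Nψ)))*(∫ ξ, ‖v ξ‖^2) := by
      have i2' : Integrable (fun ξ => 2*C*c^2*(‖p ξ‖*‖ψ ξ‖)) volume := i2.const_mul _
      have i3' : Integrable (fun ξ => 2*C*c^2*(‖v ξ‖*‖ψ ξ‖)) volume := i3.const_mul _
      have i4' : Integrable (fun ξ => (2*C*(M*(Real.sqrt 2 * Nψ)))*‖v ξ‖^2) volume :=
        i4.const_mul _
      have iB : Integrable (fun ξ => ‖f (Φ₀ ξ)‖*‖ψ ξ‖ + 2*C*c^2*(‖p ξ‖*‖ψ ξ‖)) volume :=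
        i1.add i2'
      have iA : Integrable (fun ξ => ‖f (Φ₀ ξ)‖*‖ψ ξ‖ + 2*C*c^2*(‖p ξ‖*‖ψ ξ‖)
          + 2*C*c^2*(‖v ξ‖*‖ψ ξ‖)) volume := iB.add i3'
      have iRHS : Integrable (fun ξ => ‖f (Φ₀ ξ)‖*‖ψ ξ‖ + 2*C*c^2*(‖p ξ‖*‖ψ ξ‖)
          + 2*C*c^2*(‖v ξ‖*‖ψ ξ‖) + (2*C*(M*(Real.sqrt 2 * Nψ)))*‖v ξ‖^2) volume :=
        iA.add i4'
      have h := integral_mono iLHS iRHS hpt2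
      rw [integral_add iA i4', integral_add iB i3', integral_add i1 i2',
        integral_const_mul, integral_const_mul, integral_const_mul] at h
      exact h
    have j1 : ∫ ξ, ‖f (Φ₀ ξ)‖*‖ψ ξ‖ ≤ A*Ψ := cs_norm' hfΦ₀' hψ2
    have j2 : ∫ ξ, ‖p ξ‖*‖ψ ξ‖ ≤ P*Ψ := cs_norm' hp2 hψ2
    have j3 : ∫ ξ, ‖v ξ‖*‖ψ ξ‖ ≤ a*Ψ := cs_norm' hv2 hψ2
    have j4 : (∫ ξ, ‖v ξ‖^2) = a^2 := integral_norm_sq hv2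
    have hEq : 2*C*(M*(Real.sqrt 2 * Nψ)) = 4*C*(1+N)*Nψ := by
      rw [hMdef]
      linear_combination (2*C*Nψ*(1+N)) * hs2
    have hsum2 : ∫ ξ, ‖f (Φ₀ ξ + p ξ + v ξ)‖ * ‖ψ ξ‖
        ≤ A*Ψ + 2*C*c^2*(P*Ψ) + 2*C*c^2*(a*Ψ) + 4*C*(1+N)*Nψ*a^2 := by
      have m1 := mul_le_mul_of_nonneg_left j2 h2cc
      have m2 := mul_le_mul_of_nonneg_left j3 h2cc
      have hq : (2*C*(M*(Real.sqrt 2 * Nψ)))*a^2 = 4*C*(1+N)*Nψ*a^2 := by rw [hEq]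
      rw [j4] at hsplit
      linarith [hsplit, j1, m1, m2, hq]
    have hT2 : (1:ℝ) ≤ 1 + N*a^2 := by linarith [mul_nonneg hN0 (sq_nonneg a)]
    have hT20 : (0:ℝ) ≤ 1 + N*a^2 := by linarith
    have hfinal : A*Ψ + 2*C*c^2*(P*Ψ) + 2*C*c^2*(a*Ψ) + 4*C*(1+N)*Nψ*a^2
        ≤ 20*(A + C*c^2 + C + 1) * (1 + N*a^2) * Nψ := by
      have h4CNψ : (0:ℝ) ≤ 4*C*Nψ := by
        have := mul_nonneg hC.le hNψ0; linarith
      have k1 : Ψ ≤ (1 + N*a^2)*Nψ := by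
        have := mul_nonneg (mul_nonneg hN0 (sq_nonneg a)) hNψ0
        nlinarith [hΨle, hNψ0]
      have k2 : P*Ψ ≤ (1 + N*a^2)*Nψ := by
        have hPP := mul_le_mul_of_nonneg_right hPle hΨ0
        rw [one_mul] at hPP
        linarith [hPP, k1]
      have k3 : a*Ψ ≤ (1 + N*a^2)*Nψ := mul_le_mul (auxd ha0 haN) hΨle hΨ0 hT20
      have k4 : a^2 ≤ 1 + N*a^2 := auxc ha0 haN
      have k5 : N*a^2 ≤ 1 + N*a^2 := by linarith
      have q1 := mul_le_mul_of_nonneg_left k4 h4CNψ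
      have q2 := mul_le_mul_of_nonneg_left k5 h4CNψ
      have f1 := mul_le_mul_of_nonneg_left k1 hA0
      have f2 := mul_le_mul_of_nonneg_left k2 h2cc
      have f3 := mul_le_mul_of_nonneg_left k3 h2cc
      have r1 : (0:ℝ) ≤ (1 + N*a^2)*Nψ := mul_nonneg hT20 hNψ0
      have r2 : (0:ℝ) ≤ C*((1 + N*a^2)*Nψ) := mul_nonneg hC.le r1
      have r3 : (0:ℝ) ≤ C*c^2*((1 + N*a^2)*Nψ) := mul_nonneg (mul_nonneg hC.le (sq_nonneg c)) r1
      have rA : (0:ℝ) ≤ A*((1 + N*a^2)*Nψ) := mul_nonneg hA0 r1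
      linarith [f1, f2, f3, q1, q2, r1, r2, r3, rA]
    exact habs.trans (hsum2.trans hfinal)
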